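/- Let M be an n × n integer matrix such that the multiplicative monoid ⟨M⟩ = { M^k | k ∈ ℕ } is finite. Then there exist natural numbers p ≥ 1 and q ≥ 0 with M^{q+p} = M^q; consequently, for every vector v ∈ ℤⁿ, the reachability set { M^k x + (M^{k-1} + ⋯ + M + I) v | k ∈ ℕ } from any x ∈ ℤⁿ under the affine map y = M x + v is a finite union of sets of the form { a + k·b | k ∈ ℕ } for vectors a, b ∈ ℤⁿ. -/

import Mathlib

open Finset Matrix

private lemma aux_progress {n p q : ℕ} (M : Matrix (Fin n) (Fin n) ℤ)
    (hp : 1 ≤ p) (hqp : M ^ (q + p) = M ^ q) (v x : Fin n → ℤ) :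
    ∃ s : Finset ((Fin n → ℤ) × (Fin n → ℤ)),
      {y : Fin n → ℤ | ∃ k : ℕ,
          y = (M ^ k).mulVec x + (∑ i ∈ Finset.range k, M ^ i).mulVec v} =
      ⋃ ab ∈ s, {y : Fin n → ℤ | ∃ k : ℕ, y = ab.1 + (k : ℤ) • ab.2} := by
  classical
  set f : ℕ → Fin n → ℤ :=
    fun k => (M ^ k).mulVec x + (∑ i ∈ Finset.range k, M ^ i).mulVec v with hf
  set g : ℕ → Fin n → ℤ :=
    fun r => (M ^ (q + r)).mulVec ((∑ i ∈ Finset.range p, M ^ i).mulVec v) with hg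
  have hpow : ∀ m, M ^ (q + m + p) = M ^ (q + m) := by
    intro m
    rw [show q + m + p = (q + p) + m by omega, pow_add, hqp, ← pow_add]
  have hpowj : ∀ r j, M ^ (q + r + j * p) = M ^ (q + r) := by
    intro r j
    induction j with
    | zero => simp
    | succ j ih =>
      have : q + r + (j + 1) * p = q + (r + j * p) + p := by ring
      rw [this, hpow, show q + (r + j * p) = q + r + j * p by ring, ih]
  have hSsplit : ∀ k, (∑ i ∈ Finset.range (k + p), M ^ i) =
      (∑ i ∈ Finset.range k, M ^ i) + M ^ k * (∑ i ∈ Finset.range p, M ^ i) := by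
    intro k
    rw [Finset.sum_range_add, Finset.mul_sum]
    congr 1
    exact Finset.sum_congr rfl fun i _ => pow_add M k i
  have hstep : ∀ k, q ≤ k →
      f (k + p) = f k + (M ^ k).mulVec ((∑ i ∈ Finset.range p, M ^ i).mulVec v) := by
    intro k hk
    have hMk : M ^ (k + p) = M ^ k := by
      have := hpow (k - q)
      rwa [show q + (k - q) = k by omega] at this
    simp only [hf, hMk, hSsplit k, Matrix.add_mulVec, Matrix.mulVec_mulVec]
    abel
  have hprog : ∀ r j, f (q + r + j * p) = f (q + r) + (j : ℤ) • g r := by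
    intro r j
    induction j with
    | zero => simp
    | succ j ih =>
      have h1 : q + r + (j + 1) * p = (q + r + j * p) + p := by ring
      rw [h1, hstep _ (by omega), ih, hpowj]
      push_cast
      rw [add_smul, one_smul]
      abel
  refine ⟨((Finset.range q).image fun k => (f k, (0 : Fin n → ℤ))) ∪
      ((Finset.range p).image fun r => (f (q + r), g r)), ?_⟩
  ext y
  simp only [Set.mem_setOf_eq, Set.mem_iUnion, Finset.mem_union, Finset.mem_image,
    Finset.mem_range, exists_prop]
  constructor
  · rintro ⟨k, rfl⟩
    rcases lt_or_ge k q with hk | hk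
    · exact ⟨(f k, 0), Or.inl ⟨k, hk, rfl⟩, 0, by simp [hf]⟩
    · set r := (k - q) % p with hr
      set j := (k - q) / p with hj
      have hd : p * j + r = k - q := Nat.div_add_mod (k - q) p
      have hk' : k = q + r + j * p := by rw [mul_comm]; omega
      refine ⟨(f (q + r), g r), Or.inr ⟨r, Nat.mod_lt _ (by omega), rfl⟩, j, ?_⟩
      rw [← hprog, ← hk']
  · rintro ⟨ab, hab, j, rfl⟩
    rcases hab with ⟨k, hk, rfl⟩ | ⟨r, hr, rfl⟩
    · exact ⟨k, by simp [hf]⟩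
    · exact ⟨q + r + j * p, (hprog r j).symm⟩

/-- If the monoid of powers of an integer matrix `M` is finite, then the powers of `M`
are eventually periodic, and the reachability set of any affine map `y = M x + v`
is a finite union of arithmetic progressions. -/
theorem stmt_17 {n : ℕ} (M : Matrix (Fin n) (Fin n) ℤ)
    (hfin : (Set.range fun k : ℕ => M ^ k).Finite) :
    (∃ p : ℕ, 1 ≤ p ∧ ∃ q : ℕ, M ^ (q + p) = M ^ q) ∧
    ∀ v x : Fin n → ℤ,
      ∃ s : Finset ((Fin n → ℤ) × (Fin n → ℤ)),
        {y : Fin n → ℤ | ∃ k : ℕ,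
            y = (M ^ k).mulVec x + (∑ i ∈ Finset.range k, M ^ i).mulVec v} =
        ⋃ ab ∈ s, {y : Fin n → ℤ | ∃ k : ℕ, y = ab.1 + (k : ℤ) • ab.2} := by
  have hsub := hfin.to_subtype
  obtain ⟨a, b, hab, heq⟩ := Finite.exists_ne_map_eq_of_infinite
    (fun k : ℕ => (⟨M ^ k, Set.mem_range_self k⟩ : ↥(Set.range fun k : ℕ => M ^ k)))
  have heq' : M ^ a = M ^ b := congrArg Subtype.val heq
  obtain ⟨p, q, hp, hqp⟩ : ∃ p q : ℕ, 1 ≤ p ∧ M ^ (q + p) = M ^ q := by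
    rcases hab.lt_or_gt with h | h
    · exact ⟨b - a, a, by omega, by rw [Nat.add_sub_cancel' h.le]; exact heq'.symm⟩
    · exact ⟨a - b, b, by omega, by rw [Nat.add_sub_cancel' h.le]; exact heq'⟩
  exact ⟨⟨p, hp, q, hqp⟩, fun v x => aux_progress M hp hqp v x⟩
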